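/- For any Boolean function f : {0,1}^n → {0,1}, the energy complexity of f satisfies EC(f) ≤ n + 2·D(f) − 2, where D(f) is the decision tree complexity of f. -/

import Mathlib

/-- A gate in a Boolean circuit over the standard basis `{∨₂, ∧₂, ¬}`:
input gates labelled by variables, constant gates, and `∧`/`∨`/`¬` gates
whose arguments are (indices of) earlier gates. -/
inductive Gate (n : ℕ) : Type where
  | input : Fin n → Gate n
  | const : Bool → Gate n
  | and : ℕ → ℕ → Gate n
  | or : ℕ → ℕ → Gate n
  | not : ℕ → Gate n
deriving DecidableEq

/-- The indices of the incoming gates of a gate. -/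
def Gate.deps {n : ℕ} : Gate n → List ℕ
  | .and a b => [a, b]
  | .or a b => [a, b]
  | .not a => [a]
  | _ => []

/-- Inner gates are the non-input (and non-constant) gates, i.e. `∧`, `∨`, `¬` gates. -/
def Gate.isInner {n : ℕ} : Gate n → Bool
  | .and _ _ => true
  | .or _ _ => true
  | .not _ => true
  | _ => false

/-- A Boolean circuit over the standard basis on `n` input variables: a sequence of
gates (topologically sorted, so each gate only takes earlier gates as inputs,
which makes the underlying graph acyclic) together with a designated output gate. -/
structure Circuit (n : ℕ) : Type where
  size : ℕ
  gates : Fin size → Gate n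
  out : Fin size
  wf : ∀ i : Fin size, ∀ j ∈ (gates i).deps, j < (i : ℕ)

/-- The Boolean value of gate `i` of circuit `C` under input `x`. -/
def Circuit.evalGate {n : ℕ} (C : Circuit n) (x : Fin n → Bool) (i : ℕ) (h : i < C.size) :
    Bool :=
  match hg : C.gates ⟨i, h⟩ with
  | .input j => x j
  | .const b => b
  | .not a =>
      have ha : a < i := C.wf ⟨i, h⟩ a (by rw [hg]; simp [Gate.deps])
      ! C.evalGate x a (ha.trans h)
  | .and a b =>
      have ha : a < i := C.wf ⟨i, h⟩ a (by rw [hg]; simp [Gate.deps])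
      have hb : b < i := C.wf ⟨i, h⟩ b (by rw [hg]; simp [Gate.deps])
      C.evalGate x a (ha.trans h) && C.evalGate x b (hb.trans h)
  | .or a b =>
      have ha : a < i := C.wf ⟨i, h⟩ a (by rw [hg]; simp [Gate.deps])
      have hb : b < i := C.wf ⟨i, h⟩ b (by rw [hg]; simp [Gate.deps])
      C.evalGate x a (ha.trans h) || C.evalGate x b (hb.trans h)
termination_by i

/-- The output of circuit `C` on input `x`. -/
def Circuit.output {n : ℕ} (C : Circuit n) (x : Fin n → Bool) : Bool :=
  C.evalGate x C.out C.out.isLt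

/-- `C` computes the Boolean function `f`. -/
def Circuit.Computes {n : ℕ} (C : Circuit n) (f : (Fin n → Bool) → Bool) : Prop :=
  ∀ x, C.output x = f x

/-- The number of activated inner gates of `C` under input `x`. -/
def Circuit.energyAt {n : ℕ} (C : Circuit n) (x : Fin n → Bool) : ℕ :=
  (Finset.univ.filter fun i : Fin C.size =>
    (C.gates i).isInner = true ∧ C.evalGate x i i.isLt = true).card

/-- The energy complexity `EC(C)` of a circuit `C`: the maximum number of
activated inner gates over all inputs. -/
def Circuit.energy {n : ℕ} (C : Circuit n) : ℕ :=
  Finset.univ.sup fun x : Fin n → Bool => C.energyAt x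

/-- The energy complexity `EC(f)` of a Boolean function `f`: the minimum of `EC(C)`
over all circuits `C` computing `f`. -/
noncomputable def EC {n : ℕ} (f : (Fin n → Bool) → Bool) : ℕ :=
  sInf {k | ∃ C : Circuit n, C.Computes f ∧ C.energy = k}

/-- A deterministic decision tree on `n` Boolean variables: internal nodes query a
variable (left child on `0`, right child on `1`) and leaves are labelled `0`/`1`. -/
inductive DTree (n : ℕ) : Type where
  | leaf : Bool → DTree n
  | node : Fin n → DTree n → DTree n → DTree n

/-- Evaluation of a decision tree on an input. -/
def DTree.eval {n : ℕ} : DTree n → (Fin n → Bool) → Bool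
  | .leaf b, _ => b
  | .node i t0 t1, x => if x i then t1.eval x else t0.eval x

/-- The depth of a decision tree (number of queries on a worst-case input). -/
def DTree.depth {n : ℕ} : DTree n → ℕ
  | .leaf _ => 0
  | .node _ t0 t1 => max t0.depth t1.depth + 1

/-- The decision tree complexity `D(f)`: the minimum depth of a decision tree
computing `f`. -/
noncomputable def Dcomp {n : ℕ} (f : (Fin n → Bool) → Bool) : ℕ :=
  sInf {k | ∃ T : DTree n, (∀ x, T.eval x = f x) ∧ T.depth = k}

section Lists
variable {n : ℕ}

/-- Evaluation of a straight-line program given as a list of gates. -/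
def evalL (L : List (Gate n)) (x : Fin n → Bool) : ℕ → Bool
  | i =>
    match L[i]? with
    | some (.input j) => x j
    | some (.const b) => b
    | some (.not a) => if _ : a < i then !evalL L x a else false
    | some (.and a b) =>
        (if _ : a < i then evalL L x a else false) &&
        (if _ : b < i then evalL L x b else false)
    | some (.or a b) =>
        (if _ : a < i then evalL L x a else false) ||
        (if _ : b < i then evalL L x b else false)
    | none => false
  termination_by i => i

def wfL (L : List (Gate n)) : Prop :=
  ∀ (i : ℕ) (g : Gate n), L[i]? = some g → ∀ k ∈ g.deps, k < i

lemma evalL_append (L M : List (Gate n)) (x : Fin n → Bool) :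
    ∀ i, i < L.length → evalL (L ++ M) x i = evalL L x i := by
  intro i
  induction i using Nat.strong_induction_on with
  | _ i ih =>
    intro hi
    rw [evalL, evalL, List.getElem?_append_left hi]
    cases h : L[i]? with
    | none => rfl
    | some g =>
      cases g with
      | input j => rfl
      | const b => rfl
      | not a =>
        by_cases ha : a < i <;> simp [ha, fun h' => ih a h' (h'.trans hi)]
      | and a b =>
        by_cases ha : a < i <;> by_cases hb : b < i <;>
          simp [ha, hb, fun h' => ih a h' (h'.trans hi), fun h' => ih b h' (h'.trans hi)]
      | or a b =>
        by_cases ha : a < i <;> by_cases hb : b < i <;>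
          simp [ha, hb, fun h' => ih a h' (h'.trans hi), fun h' => ih b h' (h'.trans hi)]
/-- Whether gate `i` is an activated inner gate. -/
def actP (L : List (Gate n)) (x : Fin n → Bool) (i : ℕ) : Bool :=
  (match L[i]? with | some g => g.isInner | none => false) && evalL L x i

/-- Number of activated inner gates with index in `[lo, hi)`. -/
def actCount (L : List (Gate n)) (x : Fin n → Bool) (lo hi : ℕ) : ℕ :=
  ((Finset.Ico lo hi).filter (fun i => actP L x i = true)).card

lemma actCount_le (L : List (Gate n)) (x : Fin n → Bool) (lo hi : ℕ) :
    actCount L x lo hi ≤ hi - lo := by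
  calc actCount L x lo hi ≤ (Finset.Ico lo hi).card := Finset.card_filter_le _ _
  _ = hi - lo := Nat.card_Ico lo hi

lemma actCount_split (L : List (Gate n)) (x : Fin n → Bool) {lo mid hi : ℕ}
    (h1 : lo ≤ mid) (h2 : mid ≤ hi) :
    actCount L x lo hi = actCount L x lo mid + actCount L x mid hi := by
  unfold actCount
  rw [← Finset.card_union_of_disjoint, ← Finset.filter_union, Finset.Ico_union_Ico_eq_Ico h1 h2]
  exact Finset.disjoint_filter_filter (Finset.Ico_disjoint_Ico_consecutive lo mid hi)

lemma actCount_eq_zero (L : List (Gate n)) (x : Fin n → Bool) {lo hi : ℕ}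
    (h : ∀ i, lo ≤ i → i < hi → actP L x i = false) :
    actCount L x lo hi = 0 := by
  unfold actCount
  rw [Finset.card_eq_zero, Finset.filter_eq_empty_iff]
  intro i hi'
  simp only [Finset.mem_Ico] at hi'
  simp [h i hi'.1 hi'.2]

lemma actCount_self (L : List (Gate n)) (x : Fin n → Bool) (lo : ℕ) :
    actCount L x lo lo = 0 := by
  simp [actCount]

lemma actCount_singleton (L : List (Gate n)) (x : Fin n → Bool) (m : ℕ) :
    actCount L x m (m + 1) = if actP L x m then 1 else 0 := by
  unfold actCount
  rw [Nat.Ico_succ_singleton, Finset.filter_singleton]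
  split <;> simp_all

lemma actP_append (L M : List (Gate n)) (x : Fin n → Bool) {i : ℕ} (hi : i < L.length) :
    actP (L ++ M) x i = actP L x i := by
  unfold actP
  rw [List.getElem?_append_left hi, evalL_append L M x i hi]

lemma actCount_append (L M : List (Gate n)) (x : Fin n → Bool) {lo hi : ℕ}
    (h : hi ≤ L.length) :
    actCount (L ++ M) x lo hi = actCount L x lo hi := by
  unfold actCount
  congr 1
  apply Finset.filter_congr
  intro i hi'
  simp only [Finset.mem_Ico] at hi'
  rw [actP_append L M x (lt_of_lt_of_le hi'.2 h)]

/-- `evalL` at the index of a newly appended gate. -/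
lemma evalL_concat (L : List (Gate n)) (g : Gate n) (x : Fin n → Bool) :
    evalL (L ++ [g]) x L.length =
      match g with
      | .input j => x j
      | .const b => b
      | .not a => if a < L.length then !evalL L x a else false
      | .and a b => (if a < L.length then evalL L x a else false) &&
          (if b < L.length then evalL L x b else false)
      | .or a b => (if a < L.length then evalL L x a else false) ||
          (if b < L.length then evalL L x b else false) := by
  rw [evalL]
  have hg : (L ++ [g])[L.length]? = some g := by
    rw [List.getElem?_append_right (le_refl _)]
    simp
  rw [hg]
  cases g with
  | input j => rfl
  | const b => rfl
  | not a =>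
    by_cases ha : a < L.length <;> simp [ha, evalL_append]
  | and a b =>
    by_cases ha : a < L.length <;> by_cases hb : b < L.length <;>
      simp [ha, hb, evalL_append]
  | or a b =>
    by_cases ha : a < L.length <;> by_cases hb : b < L.length <;>
      simp [ha, hb, evalL_append]

lemma evalL_concat_and (L : List (Gate n)) {a b : ℕ} (x : Fin n → Bool)
    (ha : a < L.length) (hb : b < L.length) :
    evalL (L ++ [Gate.and a b]) x L.length = (evalL L x a && evalL L x b) := by
  rw [evalL_concat]; simp [ha, hb]

lemma evalL_concat_or (L : List (Gate n)) {a b : ℕ} (x : Fin n → Bool)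
    (ha : a < L.length) (hb : b < L.length) :
    evalL (L ++ [Gate.or a b]) x L.length = (evalL L x a || evalL L x b) := by
  rw [evalL_concat]; simp [ha, hb]

lemma actP_concat (L : List (Gate n)) (g : Gate n) (x : Fin n → Bool) :
    actP (L ++ [g]) x L.length = (g.isInner && evalL (L ++ [g]) x L.length) := by
  unfold actP
  congr 1
  rw [List.getElem?_append_right (le_refl _)]
  simp

lemma wfL_concat {L : List (Gate n)} {g : Gate n} (hw : wfL L)
    (hg : ∀ k ∈ g.deps, k < L.length) : wfL (L ++ [g]) := by
  intro i g' h k hk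
  rcases lt_or_ge i L.length with hi | hi
  · rw [List.getElem?_append_left hi] at h
    exact hw i g' h k hk
  · rw [List.getElem?_append_right hi] at h
    have : i - L.length < 1 := by
      by_contra hc
      rw [List.getElem?_eq_none] at h; · exact absurd h (by simp)
      simp; omega
    have hil : i = L.length := by omega
    subst hil
    simp at h
    subst h
    exact lt_of_lt_of_le (hg k hk) (le_refl _)
/-- The base program: `n` input gates followed by `n` negation gates. -/
def baseL (n : ℕ) : List (Gate n) :=
  (List.ofFn fun j : Fin n => Gate.input j) ++ (List.ofFn fun j : Fin n => Gate.not j)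

lemma baseL_length : (baseL n).length = 2 * n := by
  simp [baseL]; omega

lemma baseL_get_lt {j : ℕ} (hj : j < n) : (baseL n)[j]? = some (Gate.input ⟨j, hj⟩) := by
  unfold baseL
  rw [List.getElem?_append_left (by simpa using hj)]
  simp [List.getElem?_ofFn, List.ofFnNthVal, hj]

lemma baseL_get_ge {j : ℕ} (hj : j < n) :
    (baseL n)[n + j]? = some (Gate.not j) := by
  unfold baseL
  rw [List.getElem?_append_right (by simp)]
  simp [List.getElem?_ofFn, List.ofFnNthVal, hj]

lemma wfL_baseL : wfL (baseL n) := by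
  intro i g h k hk
  unfold baseL at h
  rcases lt_or_ge i n with hi | hi
  · rw [List.getElem?_append_left (by simpa using hi)] at h
    rw [List.getElem?_ofFn] at h
    simp [List.ofFnNthVal, hi] at h
    rw [← h] at hk
    simp [Gate.deps] at hk
  · rw [List.getElem?_append_right (by simpa using hi)] at h
    rcases lt_or_ge i (2 * n) with h2 | h2
    · have hin : i - n < n := by omega
      rw [List.getElem?_ofFn] at h
      simp only [List.ofFnNthVal] at h
      rw [dif_pos (by simpa using hin)] at h
      rw [← Option.some_inj] at h
      simp at h
      rw [← h] at hk
      simp [Gate.deps] at hk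
      omega
    · rw [List.getElem?_eq_none (by simp; omega)] at h
      exact absurd h (by simp)

lemma evalL_baseL_input (x : Fin n → Bool) {j : ℕ} (hj : j < n) :
    evalL (baseL n) x j = x ⟨j, hj⟩ := by
  rw [evalL, baseL_get_lt hj]

lemma evalL_baseL_not (x : Fin n → Bool) {j : ℕ} (hj : j < n) :
    evalL (baseL n) x (n + j) = !x ⟨j, hj⟩ := by
  rw [evalL, baseL_get_ge hj]
  have h : j < n + j := by omega
  simp only [h, dif_pos]
  rw [evalL_baseL_input x hj]
lemma evalL_base_input {L : List (Gate n)} (hb : baseL n <+: L) (x : Fin n → Bool)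
    {j : ℕ} (hj : j < n) : evalL L x j = x ⟨j, hj⟩ := by
  obtain ⟨M, hM⟩ := hb
  rw [← hM, evalL_append _ _ _ _ (by rw [baseL_length]; omega), evalL_baseL_input x hj]

lemma evalL_base_not {L : List (Gate n)} (hb : baseL n <+: L) (x : Fin n → Bool)
    {j : ℕ} (hj : j < n) : evalL L x (n + j) = !x ⟨j, hj⟩ := by
  obtain ⟨M, hM⟩ := hb
  rw [← hM, evalL_append _ _ _ _ (by rw [baseL_length]; omega), evalL_baseL_not x hj]

lemma baseL_length_le {L : List (Gate n)} (hb : baseL n <+: L) : 2 * n ≤ L.length := by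
  obtain ⟨M, hM⟩ := hb
  rw [← hM]
  simp [baseL_length]

/-- Whether a tree has no internal node whose two children are leaves
with the same label. -/
def DTree.Reduced {n : ℕ} : DTree n → Prop
  | .leaf _ => True
  | .node _ t0 t1 => t0.Reduced ∧ t1.Reduced ∧
      ∀ b0 b1, t0 = .leaf b0 → t1 = .leaf b1 → b0 ≠ b1

mutual
/-- Build gates computing `(value of gate a) ∧ (t.eval x)`, appending to `L`.
Returns the new list and an optional output index (`none` denotes constant `false`). -/
def buildT : DTree n → ℕ → List (Gate n) → List (Gate n) × Option ℕ
  | .leaf true, a, L => (L, some a)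
  | .leaf false, _, L => (L, none)
  | .node j s0 s1, a, L =>
      let p0 := buildC s0 (Gate.and a (n + (j : ℕ))) L
      let p1 := buildC s1 (Gate.and a (j : ℕ)) p0.1
      match p0.2, p1.2 with
      | none, none => (p1.1, none)
      | some o, none => (p1.1, some o)
      | none, some o => (p1.1, some o)
      | some o0, some o1 => (p1.1 ++ [Gate.or o0 o1], some p1.1.length)
  termination_by t _ _ => (sizeOf t, 0)

/-- Build gates computing `(value of gate g) ∧ (s.eval x)`, where the gate `g`
is appended first (unless `s` is trivial). -/
def buildC : DTree n → Gate n → List (Gate n) → List (Gate n) × Option ℕ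
  | .leaf false, _, L => (L, none)
  | .leaf true, g, L => (L ++ [g], some L.length)
  | .node j s0 s1, g, L => buildT (.node j s0 s1) L.length (L ++ [g])
  termination_by s _ _ => (sizeOf s, 1)
end
lemma buildT_leaf_true (a : ℕ) (L : List (Gate n)) :
    buildT (.leaf true) a L = (L, some a) := by rw [buildT]

lemma buildT_leaf_false (a : ℕ) (L : List (Gate n)) :
    buildT (.leaf false) a L = (L, none) := by rw [buildT]

lemma buildT_node (j : Fin n) (s0 s1 : DTree n) (a : ℕ) (L : List (Gate n)) :
    buildT (.node j s0 s1) a L =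
      (let p0 := buildC s0 (Gate.and a (n + (j : ℕ))) L
       let p1 := buildC s1 (Gate.and a (j : ℕ)) p0.1
       match p0.2, p1.2 with
       | none, none => (p1.1, none)
       | some o, none => (p1.1, some o)
       | none, some o => (p1.1, some o)
       | some o0, some o1 => (p1.1 ++ [Gate.or o0 o1], some p1.1.length)) := by
  rw [buildT]

lemma buildC_leaf_false (g : Gate n) (L : List (Gate n)) :
    buildC (.leaf false) g L = (L, none) := by rw [buildC]

lemma buildC_leaf_true (g : Gate n) (L : List (Gate n)) :
    buildC (.leaf true) g L = (L ++ [g], some L.length) := by rw [buildC]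

lemma buildC_node (j : Fin n) (s0 s1 : DTree n) (g : Gate n) (L : List (Gate n)) :
    buildC (.node j s0 s1) g L = buildT (.node j s0 s1) L.length (L ++ [g]) := by
  rw [buildC]

def optVal (L : List (Gate n)) (x : Fin n → Bool) : Option ℕ → Bool
  | none => false
  | some o => evalL L x o

lemma evalL_prefix {L L' : List (Gate n)} (h : L <+: L') (x : Fin n → Bool)
    {i : ℕ} (hi : i < L.length) : evalL L' x i = evalL L x i := by
  obtain ⟨M, hM⟩ := h
  rw [← hM, evalL_append _ _ _ _ hi]

/-- The induction package for `buildT`. -/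
def PS (t : DTree n) : Prop :=
  ∀ a (L : List (Gate n)), wfL L → baseL n <+: L → a < L.length →
    (L <+: (buildT t a L).1) ∧ wfL (buildT t a L).1 ∧
    (∀ o, (buildT t a L).2 = some o → o < (buildT t a L).1.length) ∧
    (∀ x, optVal (buildT t a L).1 x (buildT t a L).2 = (evalL L x a && t.eval x)) ∧
    (∀ x, evalL L x a = false →
      actCount (buildT t a L).1 x L.length (buildT t a L).1.length = 0) ∧
    (t.Reduced → ∀ x, evalL L x a = true →
      actCount (buildT t a L).1 x L.length (buildT t a L).1.length ≤
        (if t.eval x then 2 * t.depth - 1 else t.depth - 1))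
lemma buildC_spec {s : DTree n} (hPS : PS s) :
    ∀ a k (L : List (Gate n)), wfL L → baseL n <+: L → a < L.length → k < L.length →
    (L <+: (buildC s (Gate.and a k) L).1) ∧ wfL (buildC s (Gate.and a k) L).1 ∧
    (∀ o, (buildC s (Gate.and a k) L).2 = some o → o < (buildC s (Gate.and a k) L).1.length) ∧
    (∀ x, optVal (buildC s (Gate.and a k) L).1 x (buildC s (Gate.and a k) L).2 =
       ((evalL L x a && evalL L x k) && s.eval x)) ∧
    (∀ x, (evalL L x a && evalL L x k) = false →
       actCount (buildC s (Gate.and a k) L).1 x L.length (buildC s (Gate.and a k) L).1.length = 0) ∧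
    (s.Reduced → ∀ x, (evalL L x a && evalL L x k) = true →
       actCount (buildC s (Gate.and a k) L).1 x L.length (buildC s (Gate.and a k) L).1.length ≤
         (if s.eval x then max (2 * s.depth) 1 else s.depth)) := by
  intro a k L hw hb ha hk
  match s with
  | .leaf false =>
    rw [buildC_leaf_false]
    refine ⟨List.prefix_refl L, hw, ?_, ?_, ?_, ?_⟩
    · intro o h; exact absurd h (by simp)
    · intro x; simp [optVal, DTree.eval]
    · intro x _; exact actCount_self L x L.length
    · intro _ x _; simp [actCount_self, DTree.eval]
  | .leaf true =>
    rw [buildC_leaf_true]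
    have hdeps : ∀ m ∈ (Gate.and a k : Gate n).deps, m < L.length := by
      intro m hm; simp [Gate.deps] at hm; rcases hm with h | h <;> omega
    have hlen : (L ++ [Gate.and a k]).length = L.length + 1 := by simp
    refine ⟨⟨[Gate.and a k], rfl⟩, wfL_concat hw hdeps, ?_, ?_, ?_, ?_⟩
    · intro o h; simp at h; rw [← h, hlen]; omega
    · intro x
      simp only [optVal]
      rw [evalL_concat_and L x ha hk]
      simp [DTree.eval]
    · intro x hv
      rw [hlen, actCount_singleton]
      rw [actP_concat, evalL_concat_and L x ha hk, hv]
      simp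
    · intro _ x _
      rw [hlen]
      calc actCount _ x L.length (L.length + 1) ≤ (L.length + 1) - L.length :=
            actCount_le _ x _ _
        _ = 1 := by omega
        _ ≤ _ := by simp [DTree.eval, DTree.depth]
  | .node j0 u0 u1 =>
    rw [buildC_node]
    set g := Gate.and a k with hg
    set m := L.length with hmdef
    set L1 := L ++ [g] with hL1
    have hdeps : ∀ m' ∈ g.deps, m' < L.length := by
      intro m' hm; simp [hg, Gate.deps] at hm; rcases hm with h | h <;> omega
    have hw1 : wfL L1 := wfL_concat hw hdeps
    have hb1 : baseL n <+: L1 := hb.trans ⟨[g], rfl⟩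
    have hlen1 : L1.length = m + 1 := by simp [hL1, hmdef]
    have hm1 : m < L1.length := by omega
    obtain ⟨P1, P2, P3, P4, P5, P6⟩ := hPS m L1 hw1 hb1 hm1
    have hgv : ∀ x, evalL L1 x m = (evalL L x a && evalL L x k) := fun x =>
      evalL_concat_and L x ha hk
    have hpre : L <+: (buildT (.node j0 u0 u1) m L1).1 := List.IsPrefix.trans ⟨[g], rfl⟩ P1
    have hlenle : L1.length ≤ (buildT (.node j0 u0 u1) m L1).1.length := P1.length_le
    have hsplit : ∀ x, actCount (buildT (.node j0 u0 u1) m L1).1 x m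
        (buildT (.node j0 u0 u1) m L1).1.length =
        actCount (buildT (.node j0 u0 u1) m L1).1 x m (m + 1) +
        actCount (buildT (.node j0 u0 u1) m L1).1 x (m + 1)
          (buildT (.node j0 u0 u1) m L1).1.length := by
      intro x; exact actCount_split _ x (by omega) (by omega)
    have hactm : ∀ x, actP (buildT (.node j0 u0 u1) m L1).1 x m =
        (g.isInner && (evalL L x a && evalL L x k)) := by
      intro x
      obtain ⟨M, hM⟩ := P1
      rw [← hM, actP_append _ _ _ (by omega), actP_concat, hgv x]
    refine ⟨hpre, P2, P3, ?_, ?_, ?_⟩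
    · intro x; rw [P4 x, hgv x]
    · intro x hv
      rw [hsplit x, actCount_singleton, hactm x, hv]
      have := P5 x (by rw [hgv x, hv])
      rw [hlen1] at this
      simp [this]
    · intro hr x hv
      have hbd := P6 hr x (by rw [hgv x, hv])
      rw [hlen1] at hbd
      rw [hsplit x, actCount_singleton, hactm x, hv]
      have hd : 1 ≤ DTree.depth (DTree.node j0 u0 u1) := by simp [DTree.depth]
      simp only [hg, Gate.isInner, Bool.true_and, Bool.and_true, if_true]
      cases he : DTree.eval (DTree.node j0 u0 u1) x
      · simp only [he, Bool.false_eq_true, if_false] at hbd ⊢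
        omega
      · simp only [he, if_true] at hbd ⊢
        rw [Nat.max_eq_left (by omega)]
        omega
lemma actCount_of_prefix {L1 L2 : List (Gate n)} (h : L1 <+: L2) (x : Fin n → Bool)
    {lo hi : ℕ} (hhi : hi ≤ L1.length) :
    actCount L2 x lo hi = actCount L1 x lo hi := by
  obtain ⟨M, hM⟩ := h
  rw [← hM, actCount_append _ _ _ hhi]

lemma DTree.shape (t : DTree n) : (∃ b, t = DTree.leaf b) ∨ 1 ≤ t.depth := by
  cases t with
  | leaf b => exact Or.inl ⟨b, rfl⟩
  | node j t0 t1 => right; simp [DTree.depth]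

theorem PS_all (t : DTree n) : PS t := by
  induction t with
  | leaf b =>
    cases b <;> intro a L hw hb ha
    · rw [buildT_leaf_false]
      refine ⟨List.prefix_refl L, hw, ?_, ?_, ?_, ?_⟩
      · intro o h; exact absurd h (by simp)
      · intro x; simp [optVal, DTree.eval]
      · intro x _; exact actCount_self L x L.length
      · intro _ x _; simp [actCount_self, DTree.eval, DTree.depth]
    · rw [buildT_leaf_true]
      refine ⟨List.prefix_refl L, hw, ?_, ?_, ?_, ?_⟩
      · intro o h; simp at h ⊢; omega
      · intro x; simp [optVal, DTree.eval]
      · intro x _; exact actCount_self L x L.length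
      · intro _ x _; simp [actCount_self, DTree.eval, DTree.depth]
  | node j s0 s1 ih0 ih1 =>
    intro a L hw hb ha
    have hjn : (j : ℕ) < n := j.isLt
    have h2n : 2 * n ≤ L.length := baseL_length_le hb
    have hkj : (j : ℕ) < L.length := by omega
    have hknj : n + (j : ℕ) < L.length := by omega
    obtain ⟨Q01, Q02, Q03, Q04, Q05, Q06⟩ := buildC_spec ih0 a (n + (j : ℕ)) L hw hb ha hknj
    set p0 := buildC s0 (Gate.and a (n + (j : ℕ))) L with hp0
    have hb0 : baseL n <+: p0.1 := hb.trans Q01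
    obtain ⟨Q11, Q12, Q13, Q14, Q15, Q16⟩ := buildC_spec ih1 a (j : ℕ) p0.1 Q02 hb0
      (lt_of_lt_of_le ha Q01.length_le) (lt_of_lt_of_le hkj Q01.length_le)
    set p1 := buildC s1 (Gate.and a (j : ℕ)) p0.1 with hp1
    have hva : ∀ x, evalL p0.1 x a = evalL L x a := fun x => evalL_prefix Q01 x ha
    have hnotj : ∀ x, evalL L x (n + (j : ℕ)) = !(x j) := by
      intro x; rw [evalL_base_not hb x hjn]
    have hinpj : ∀ x, evalL p0.1 x (j : ℕ) = x j := by
      intro x; rw [evalL_base_input hb0 x hjn]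
    have hLp0 : L.length ≤ p0.1.length := Q01.length_le
    have hp0p1 : p0.1.length ≤ p1.1.length := Q11.length_le
    -- shared count lemmas
    have HC5 : ∀ x, evalL L x a = false →
        actCount p1.1 x L.length p1.1.length = 0 := by
      intro x hα
      rw [actCount_split p1.1 x hLp0 hp0p1, actCount_of_prefix Q11 x (le_refl _),
        Q05 x (by rw [hα]; rfl), Q15 x (by rw [hva x, hα]; rfl)]
    have HC6 : DTree.Reduced (DTree.node j s0 s1) → ∀ x, evalL L x a = true →
        actCount p1.1 x L.length p1.1.length ≤
          if DTree.eval (DTree.node j s0 s1) x then 2 * (DTree.node j s0 s1).depth - 1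
          else (DTree.node j s0 s1).depth - 1 := by
      intro hr x hα
      obtain ⟨R0, R1, hne⟩ := hr
      rw [actCount_split p1.1 x hLp0 hp0p1, actCount_of_prefix Q11 x (le_refl _)]
      have m1 : s0.depth ≤ max s0.depth s1.depth := le_max_left _ _
      have m2 : s1.depth ≤ max s0.depth s1.depth := le_max_right _ _
      have m3 : max (2 * s0.depth) 1 ≤ 2 * s0.depth + 1 := max_le (by omega) (by omega)
      have m4 : max (2 * s1.depth) 1 ≤ 2 * s1.depth + 1 := max_le (by omega) (by omega)
      cases hx : x j
      · have hseg1 : actCount p1.1 x p0.1.length p1.1.length = 0 :=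
          Q15 x (by rw [hinpj x, hx]; simp)
        have hseg0 := Q06 R0 x (by rw [hnotj x, hx, hα]; rfl)
        rw [hseg1]
        simp only [DTree.eval, DTree.depth, hx, Bool.false_eq_true, if_false]
        cases he0 : s0.eval x <;> simp only [he0, Bool.false_eq_true, if_false, if_true] at hseg0 ⊢ <;> omega
      · have hseg0 : actCount p0.1 x L.length p0.1.length = 0 :=
          Q05 x (by rw [hnotj x, hx, hα]; rfl)
        have hseg1 := Q16 R1 x (by rw [hva x, hinpj x, hx, hα]; rfl)
        rw [hseg0]
        simp only [DTree.eval, DTree.depth, hx, if_true]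
        cases he1 : s1.eval x <;> simp only [he1, Bool.false_eq_true, if_false, if_true] at hseg1 ⊢ <;> omega
    have HC6T : DTree.Reduced (DTree.node j s0 s1) → ∀ x, evalL L x a = true →
        DTree.eval (DTree.node j s0 s1) x = true → p0.2 ≠ none → p1.2 ≠ none →
        actCount p1.1 x L.length p1.1.length ≤ 2 * max s0.depth s1.depth := by
      intro hr x hα he hs0 hs1
      obtain ⟨R0, R1, hne⟩ := hr
      rw [actCount_split p1.1 x hLp0 hp0p1, actCount_of_prefix Q11 x (le_refl _)]
      have m1 : s0.depth ≤ max s0.depth s1.depth := le_max_left _ _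
      have m2 : s1.depth ≤ max s0.depth s1.depth := le_max_right _ _
      cases hx : x j
      · have hseg1 : actCount p1.1 x p0.1.length p1.1.length = 0 :=
          Q15 x (by rw [hinpj x, hx]; simp)
        have he0 : s0.eval x = true := by simpa [DTree.eval, hx] using he
        have hseg0 := Q06 R0 x (by rw [hnotj x, hx, hα]; rfl)
        simp only [he0, eq_self_iff_true, if_true] at hseg0
        rw [hseg1]
        rcases DTree.shape s0 with ⟨b, hbs⟩ | hd0
        · subst hbs
          cases b
          · simp [DTree.eval] at he0
          · rcases DTree.shape s1 with ⟨b1, hbs1⟩ | hd1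
            · subst hbs1
              cases b1
              · exact absurd (by rw [hp1, buildC_leaf_false]) hs1
              · exact absurd rfl (hne true true rfl rfl)
            · simp only [DTree.depth] at hseg0 ⊢
              have : max (2 * 0) 1 = 1 := rfl
              rw [this] at hseg0
              omega
        · rw [Nat.max_eq_left (by omega)] at hseg0
          omega
      · have hseg0 : actCount p0.1 x L.length p0.1.length = 0 :=
          Q05 x (by rw [hnotj x, hx, hα]; rfl)
        have he1 : s1.eval x = true := by simpa [DTree.eval, hx] using he
        have hseg1 := Q16 R1 x (by rw [hva x, hinpj x, hx, hα]; rfl)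
        simp only [he1, eq_self_iff_true, if_true] at hseg1
        rw [hseg0]
        rcases DTree.shape s1 with ⟨b, hbs⟩ | hd1
        · subst hbs
          cases b
          · simp [DTree.eval] at he1
          · rcases DTree.shape s0 with ⟨b0, hbs0⟩ | hd0
            · subst hbs0
              cases b0
              · exact absurd (by rw [hp0, buildC_leaf_false]) hs0
              · exact absurd rfl (hne true true rfl rfl)
            · simp only [DTree.depth] at hseg1 ⊢
              have : max (2 * 0) 1 = 1 := rfl
              rw [this] at hseg1
              omega
        · rw [Nat.max_eq_left (by omega)] at hseg1
          omega
    rcases hr0 : p0.2 with _ | o0 <;> rcases hr1 : p1.2 with _ | o1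
    · -- none, none
      have hbt : buildT (DTree.node j s0 s1) a L = (p1.1, none) := by
        rw [buildT_node]; simp only [← hp0, ← hp1, hr0, hr1]
      rw [hbt]
      refine ⟨Q01.trans Q11, Q12, ?_, ?_, ?_, ?_⟩
      · intro o h; exact absurd h (by simp)
      · intro x
        have F0 : ((evalL L x a && !(x j)) && s0.eval x) = false := by
          have h := (Q04 x).symm; rw [hr0, hnotj x] at h; simpa [optVal] using h
        have F1 : ((evalL L x a && x j) && s1.eval x) = false := by
          have h := (Q14 x).symm; rw [hr1, hva x, hinpj x] at h; simpa [optVal] using h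
        cases hx : x j
        · cases hα : evalL L x a
          · simp [optVal, DTree.eval, hx, hα]
          · simp [hx, hα] at F0
            simp [optVal, DTree.eval, hx, hα, F0]
        · cases hα : evalL L x a
          · simp [optVal, DTree.eval, hx, hα]
          · simp [hx, hα] at F1
            simp [optVal, DTree.eval, hx, hα, F1]
      · exact fun x h => HC5 x h
      · exact fun hr x h => HC6 hr x h
    · -- none, some o1
      have hbt : buildT (DTree.node j s0 s1) a L = (p1.1, some o1) := by
        rw [buildT_node]; simp only [← hp0, ← hp1, hr0, hr1]
      rw [hbt]
      refine ⟨Q01.trans Q11, Q12, ?_, ?_, ?_, ?_⟩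
      · intro o h; simp at h; rw [← h]; exact Q13 o1 hr1
      · intro x
        have F0 : ((evalL L x a && !(x j)) && s0.eval x) = false := by
          have h := (Q04 x).symm; rw [hr0, hnotj x] at h; simpa [optVal] using h
        have hval1 : evalL p1.1 x o1 = ((evalL L x a && x j) && s1.eval x) := by
          have h := Q14 x; rw [hr1, hva x, hinpj x] at h; simpa [optVal] using h
        show evalL p1.1 x o1 = _
        rw [hval1]
        cases hx : x j
        · cases hα : evalL L x a
          · simp [DTree.eval, hx, hα]
          · simp [hx, hα] at F0
            simp [DTree.eval, hx, hα, F0]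
        · cases hα : evalL L x a <;> simp [DTree.eval, hx, hα]
      · exact fun x h => HC5 x h
      · exact fun hr x h => HC6 hr x h
    · -- some o0, none
      have hbt : buildT (DTree.node j s0 s1) a L = (p1.1, some o0) := by
        rw [buildT_node]; simp only [← hp0, ← hp1, hr0, hr1]
      rw [hbt]
      refine ⟨Q01.trans Q11, Q12, ?_, ?_, ?_, ?_⟩
      · intro o h; simp at h; rw [← h]
        exact lt_of_lt_of_le (Q03 o0 hr0) hp0p1
      · intro x
        have F1 : ((evalL L x a && x j) && s1.eval x) = false := by
          have h := (Q14 x).symm; rw [hr1, hva x, hinpj x] at h; simpa [optVal] using h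
        have hval0 : evalL p1.1 x o0 = ((evalL L x a && !(x j)) && s0.eval x) := by
          rw [evalL_prefix Q11 x (Q03 o0 hr0)]
          have h := Q04 x; rw [hr0, hnotj x] at h; simpa [optVal] using h
        show evalL p1.1 x o0 = _
        rw [hval0]
        cases hx : x j
        · cases hα : evalL L x a <;> simp [DTree.eval, hx, hα]
        · cases hα : evalL L x a
          · simp [DTree.eval, hx, hα]
          · simp [hx, hα] at F1
            simp [DTree.eval, hx, hα, F1]
      · exact fun x h => HC5 x h
      · exact fun hr x h => HC6 hr x h
    · -- some o0, some o1
      have ho0 : o0 < p1.1.length := lt_of_lt_of_le (Q03 o0 hr0) hp0p1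
      have ho1 : o1 < p1.1.length := Q13 o1 hr1
      have hbt : buildT (DTree.node j s0 s1) a L =
          (p1.1 ++ [Gate.or o0 o1], some p1.1.length) := by
        rw [buildT_node]; simp only [← hp0, ← hp1, hr0, hr1]
      rw [hbt]
      have hwor : wfL (p1.1 ++ [Gate.or o0 o1]) := by
        apply wfL_concat Q12
        intro k hk; simp [Gate.deps] at hk; rcases hk with h | h <;> omega
      have hval0 : ∀ x, evalL p1.1 x o0 = ((evalL L x a && !(x j)) && s0.eval x) := by
        intro x
        rw [evalL_prefix Q11 x (Q03 o0 hr0)]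
        have h := Q04 x; rw [hr0, hnotj x] at h; simpa [optVal] using h
      have hval1 : ∀ x, evalL p1.1 x o1 = ((evalL L x a && x j) && s1.eval x) := by
        intro x
        have h := Q14 x; rw [hr1, hva x, hinpj x] at h; simpa [optVal] using h
      have hlen : (p1.1 ++ [Gate.or o0 o1]).length = p1.1.length + 1 := by simp
      refine ⟨(Q01.trans Q11).trans ⟨[Gate.or o0 o1], rfl⟩, hwor, ?_, ?_, ?_, ?_⟩
      · intro o h; simp at h; rw [← h]; simp
      · intro x
        show evalL (p1.1 ++ [Gate.or o0 o1]) x p1.1.length = _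
        rw [evalL_concat_or p1.1 x ho0 ho1, hval0 x, hval1 x]
        cases hx : x j <;> cases hα : evalL L x a <;> simp [DTree.eval, hx, hα]
      · intro x hα
        rw [hlen, actCount_split _ x (le_trans hLp0 hp0p1) (Nat.le_succ _),
          actCount_append _ _ _ (le_refl _), HC5 x hα, actCount_singleton,
          actP_concat, evalL_concat_or p1.1 x ho0 ho1, hval0 x, hval1 x, hα]
        simp
      · intro hr x hα
        rw [hlen, actCount_split _ x (le_trans hLp0 hp0p1) (Nat.le_succ _),
          actCount_append _ _ _ (le_refl _), actCount_singleton,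
          actP_concat, evalL_concat_or p1.1 x ho0 ho1, hval0 x, hval1 x, hα]
        simp only [Gate.isInner, Bool.true_and]
        cases he : DTree.eval (DTree.node j s0 s1) x
        · have hor : ((!(x j) && s0.eval x) || ((x j) && s1.eval x)) = false := by
            simp only [DTree.eval] at he
            cases hx : x j <;> simp [hx] at he ⊢ <;> exact he
          rw [hor]
          have hc := HC6 hr x hα
          rw [he] at hc
          simp only [Bool.false_eq_true, if_false] at hc ⊢
          simp only [DTree.depth] at hc ⊢
          omega
        · have hor : ((!(x j) && s0.eval x) || ((x j) && s1.eval x)) = true := by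
            simp only [DTree.eval] at he
            cases hx : x j <;> simp [hx] at he ⊢ <;> exact he
          rw [hor]
          have hc := HC6T hr x hα he (by rw [hr0]; exact fun h => absurd h (by simp))
            (by rw [hr1]; exact fun h => absurd h (by simp))
          simp only [he, eq_self_iff_true, if_true, DTree.depth] at hc ⊢
          omega
def DTree.merge (i : Fin n) : DTree n → DTree n → DTree n
  | .leaf b0, .leaf b1 => if b0 = b1 then .leaf b0 else .node i (.leaf b0) (.leaf b1)
  | t0, t1 => .node i t0 t1

def DTree.reduce : DTree n → DTree n
  | .leaf b => .leaf b
  | .node i t0 t1 => DTree.merge i t0.reduce t1.reduce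

lemma DTree.merge_eval (i : Fin n) (t0 t1 : DTree n) (x : Fin n → Bool) :
    (DTree.merge i t0 t1).eval x = if x i then t1.eval x else t0.eval x := by
  cases t0 with
  | leaf b0 =>
    cases t1 with
    | leaf b1 =>
      by_cases h : b0 = b1
      · subst h; simp [DTree.merge, DTree.eval]
      · simp [DTree.merge, h, DTree.eval]
    | node j u0 u1 => rfl
  | node j u0 u1 => cases t1 <;> rfl

lemma DTree.merge_depth (i : Fin n) (t0 t1 : DTree n) :
    (DTree.merge i t0 t1).depth ≤ max t0.depth t1.depth + 1 := by
  cases t0 with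
  | leaf b0 =>
    cases t1 with
    | leaf b1 =>
      by_cases h : b0 = b1
      · subst h; simp [DTree.merge, DTree.depth]
      · simp [DTree.merge, h, DTree.depth]
    | node j u0 u1 => exact le_refl _
  | node j u0 u1 => cases t1 <;> exact le_refl _

lemma DTree.merge_reduced (i : Fin n) (t0 t1 : DTree n)
    (h0 : t0.Reduced) (h1 : t1.Reduced) : (DTree.merge i t0 t1).Reduced := by
  cases t0 with
  | leaf b0 =>
    cases t1 with
    | leaf b1 =>
      by_cases h : b0 = b1
      · subst h; simp [DTree.merge, DTree.Reduced]
      · simp only [DTree.merge, h, if_false]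
        refine ⟨trivial, trivial, ?_⟩
        intro c0 c1 hc0 hc1
        cases hc0; cases hc1; exact h
    | node j u0 u1 =>
      refine ⟨h0, h1, ?_⟩
      intro c0 c1 _ hc1
      exact absurd hc1 (by simp)
  | node j u0 u1 =>
    cases t1 with
    | leaf b1 =>
      refine ⟨h0, h1, ?_⟩
      intro c0 c1 hc0 _
      exact absurd hc0 (by simp)
    | node j1 v0 v1 =>
      refine ⟨h0, h1, ?_⟩
      intro c0 c1 hc0 _
      exact absurd hc0 (by simp)

lemma DTree.reduce_eval (t : DTree n) (x : Fin n → Bool) :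
    t.reduce.eval x = t.eval x := by
  induction t with
  | leaf b => rfl
  | node i t0 t1 ih0 ih1 =>
    show (DTree.merge i t0.reduce t1.reduce).eval x = _
    rw [DTree.merge_eval, ih0, ih1]
    rfl

lemma DTree.reduce_depth (t : DTree n) : t.reduce.depth ≤ t.depth := by
  induction t with
  | leaf b => exact le_refl _
  | node i t0 t1 ih0 ih1 =>
    show (DTree.merge i t0.reduce t1.reduce).depth ≤ max t0.depth t1.depth + 1
    calc (DTree.merge i t0.reduce t1.reduce).depth
        ≤ max t0.reduce.depth t1.reduce.depth + 1 := DTree.merge_depth _ _ _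
      _ ≤ max t0.depth t1.depth + 1 := by
          have := max_le_max ih0 ih1; omega

lemma DTree.reduce_reduced (t : DTree n) : t.reduce.Reduced := by
  induction t with
  | leaf b => trivial
  | node i t0 t1 ih0 ih1 => exact DTree.merge_reduced i _ _ ih0 ih1
def toCircuit (L : List (Gate n)) (hw : wfL L) (o : ℕ) (ho : o < L.length) : Circuit n where
  size := L.length
  gates := fun i => L.get i
  out := ⟨o, ho⟩
  wf := fun i k hk => hw i (L.get i) (by rw [List.getElem?_eq_getElem i.isLt]; rfl) k hk

lemma toCircuit_evalGate (L : List (Gate n)) (hw : wfL L) (o : ℕ) (ho : o < L.length)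
    (x : Fin n → Bool) :
    ∀ (i : ℕ) (h : i < (toCircuit L hw o ho).size),
      (toCircuit L hw o ho).evalGate x i h = evalL L x i := by
  intro i
  induction i using Nat.strong_induction_on with
  | _ i ih =>
    intro h
    have hsz : (toCircuit L hw o ho).size = L.length := rfl
    have hL : L[i]? = some (L.get ⟨i, h⟩) := List.getElem?_eq_getElem h
    rw [Circuit.evalGate]
    split
    · next j hg =>
      have hg' : L.get ⟨i, h⟩ = Gate.input j := hg
      rw [evalL, hL, hg']
    · next b hg =>
      have hg' : L.get ⟨i, h⟩ = Gate.const b := hg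
      rw [evalL, hL, hg']
    · next a hg =>
      have hg' : L.get ⟨i, h⟩ = Gate.not a := hg
      have ha : a < i := hw i _ (by rw [hL, hg']) a (by simp [Gate.deps])
      rw [evalL, hL, hg']
      simp only [ha, dif_pos]
      rw [ih a ha (ha.trans h)]
    · next a b hg =>
      have hg' : L.get ⟨i, h⟩ = Gate.and a b := hg
      have ha : a < i := hw i _ (by rw [hL, hg']) a (by simp [Gate.deps])
      have hb : b < i := hw i _ (by rw [hL, hg']) b (by simp [Gate.deps])
      rw [evalL, hL, hg']
      simp only [ha, hb, dif_pos]
      rw [ih a ha (ha.trans h), ih b hb (hb.trans h)]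
    · next a b hg =>
      have hg' : L.get ⟨i, h⟩ = Gate.or a b := hg
      have ha : a < i := hw i _ (by rw [hL, hg']) a (by simp [Gate.deps])
      have hb : b < i := hw i _ (by rw [hL, hg']) b (by simp [Gate.deps])
      rw [evalL, hL, hg']
      simp only [ha, hb, dif_pos]
      rw [ih a ha (ha.trans h), ih b hb (hb.trans h)]

lemma toCircuit_output (L : List (Gate n)) (hw : wfL L) (o : ℕ) (ho : o < L.length)
    (x : Fin n → Bool) : (toCircuit L hw o ho).output x = evalL L x o :=
  toCircuit_evalGate L hw o ho x o ho

lemma actP_lt (L : List (Gate n)) (x : Fin n → Bool) {i : ℕ} (hi : i < L.length) :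
    actP L x i = ((L.get ⟨i, hi⟩).isInner && evalL L x i) := by
  unfold actP
  rw [List.getElem?_eq_getElem hi]
  rfl

lemma toCircuit_energyAt (L : List (Gate n)) (hw : wfL L) (o : ℕ) (ho : o < L.length)
    (x : Fin n → Bool) :
    (toCircuit L hw o ho).energyAt x = actCount L x 0 L.length := by
  unfold Circuit.energyAt actCount
  apply Finset.card_bij (fun (i : Fin (toCircuit L hw o ho).size) _ => (i : ℕ))
  · intro i hi
    simp only [Finset.mem_filter, Finset.mem_univ, true_and] at hi
    simp only [Finset.mem_filter, Finset.mem_Ico]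
    refine ⟨⟨by omega, i.isLt⟩, ?_⟩
    rw [actP_lt L x i.isLt]
    have he := toCircuit_evalGate L hw o ho x i i.isLt
    have h1 : (L.get ⟨(i : ℕ), i.isLt⟩).isInner = true := hi.1
    have h2 : evalL L x i = true := by rw [← he]; exact hi.2
    simp only [h2, Bool.and_true]; exact h1
  · intro i _ j _ hij
    exact Fin.ext hij
  · intro j hj
    simp only [Finset.mem_filter, Finset.mem_Ico] at hj
    refine ⟨⟨j, hj.1.2⟩, ?_, rfl⟩
    simp only [Finset.mem_filter, Finset.mem_univ, true_and]
    have := hj.2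
    rw [actP_lt L x hj.1.2] at this
    have he := toCircuit_evalGate L hw o ho x j hj.1.2
    constructor
    · have : (L.get ⟨j, hj.1.2⟩).isInner = true := by
        cases hh : (L.get ⟨j, hj.1.2⟩).isInner
        · rw [hh] at this; simp at this
        · rfl
      exact this
    · rw [he]
      cases hh : evalL L x j
      · rw [hh] at this; simp at this
      · rfl
lemma actCount_base_le {Lf : List (Gate n)} (hpre : baseL n <+: Lf) (x : Fin n → Bool) :
    actCount Lf x 0 (2 * n) ≤ n := by
  rw [actCount_of_prefix hpre x (by rw [baseL_length])]
  rw [actCount_split (baseL n) x (show 0 ≤ n by omega) (show n ≤ 2 * n by omega)]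
  have h0 : actCount (baseL n) x 0 n = 0 := by
    apply actCount_eq_zero
    intro i _ hn
    unfold actP
    rw [baseL_get_lt hn]
    rfl
  have h1 : actCount (baseL n) x n (2 * n) ≤ n :=
    le_trans (actCount_le _ _ _ _) (by omega)
  omega

lemma main_circuit (t : DTree n) (hred : t.Reduced) :
    ∃ C : Circuit n, (∀ x, C.output x = t.eval x) ∧
      (∀ x, C.energyAt x ≤ n + 2 * t.depth - 2) := by
  cases t with
  | leaf b =>
    have hw : wfL ([Gate.const b] : List (Gate n)) := by
      intro i g h k hk
      match i with
      | 0 =>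
        simp at h
        rw [← h] at hk
        simp [Gate.deps] at hk
      | i + 1 => simp at h
    refine ⟨toCircuit [Gate.const b] hw 0 (by simp), ?_, ?_⟩
    · intro x
      rw [toCircuit_output]
      have hsome : ([Gate.const b] : List (Gate n))[0]? = some (Gate.const b) := rfl
      rw [evalL, hsome]
      rfl
    · intro x
      rw [toCircuit_energyAt]
      have hz : actCount ([Gate.const b] : List (Gate n)) x 0 1 = 0 := by
        apply actCount_eq_zero
        intro i _ hi
        have : i = 0 := by omega
        subst this
        rfl
      have : ([Gate.const b] : List (Gate n)).length = 1 := rfl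
      rw [this, hz]
      omega
  | node j s0 s1 =>
    obtain ⟨R0, R1, hne⟩ := hred
    have hjn : (j : ℕ) < n := j.isLt
    have hlenb : (baseL n).length = 2 * n := baseL_length
    obtain ⟨A1, A2, A3, A4, A5, A6⟩ := PS_all s0 (n + (j : ℕ)) (baseL n) wfL_baseL
      (List.prefix_refl _) (by omega)
    set p0 := buildT s0 (n + (j : ℕ)) (baseL n) with hp0
    have hb2n0 : 2 * n ≤ p0.1.length := by
      have := A1.length_le; omega
    obtain ⟨B1, B2, B3, B4, B5, B6⟩ := PS_all s1 (j : ℕ) p0.1 A2 A1 (by omega)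
    set p1 := buildT s1 (j : ℕ) p0.1 with hp1
    have hb2n1 : 2 * n ≤ p1.1.length := by
      have := B1.length_le; omega
    have hbase1 : baseL n <+: p1.1 := A1.trans B1
    have hnot : ∀ x, evalL (baseL n) x (n + (j : ℕ)) = !(x j) := fun x =>
      evalL_base_not (List.prefix_refl _) x hjn
    have hinp : ∀ x, evalL p0.1 x (j : ℕ) = x j := fun x => evalL_base_input A1 x hjn
    have hm1 : s0.depth ≤ max s0.depth s1.depth := le_max_left _ _
    have hm2 : s1.depth ≤ max s0.depth s1.depth := le_max_right _ _
    -- energy of the middle segment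
    have HE : ∀ x, actCount p1.1 x (2 * n) p1.1.length ≤
        if DTree.eval (DTree.node j s0 s1) x
        then 2 * (if x j then s1.depth else s0.depth) - 1
        else (if x j then s1.depth else s0.depth) - 1 := by
      intro x
      rw [show (2 * n) = (baseL n).length from hlenb.symm,
        actCount_split p1.1 x A1.length_le B1.length_le,
        actCount_of_prefix B1 x (le_refl _)]
      cases hx : x j
      · have hseg1 : actCount p1.1 x p0.1.length p1.1.length = 0 :=
          B5 x (by rw [hinp x, hx])
        have hseg0 := A6 R0 x (by rw [hnot x, hx]; rfl)
        rw [hseg1]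
        simp only [DTree.eval, hx, Bool.false_eq_true, if_false]
        omega
      · have hseg0 : actCount p0.1 x (baseL n).length p0.1.length = 0 :=
          A5 x (by rw [hnot x, hx]; rfl)
        have hseg1 := B6 R1 x (by rw [hinp x, hx])
        rw [hseg0]
        simp only [DTree.eval, hx, if_true]
        omega
    have HE' : ∀ x, actCount p1.1 x (2 * n) p1.1.length ≤ 2 * max s0.depth s1.depth := by
      intro x
      have h := HE x
      have hdon : (if x j then s1.depth else s0.depth) ≤ max s0.depth s1.depth := by
        cases hx : x j <;> simp [hx, hm1, hm2]
      cases he : DTree.eval (DTree.node j s0 s1) x <;>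
        simp only [he, Bool.false_eq_true, if_false, if_true] at h <;> omega
    rcases hr0 : p0.2 with _ | o0 <;> rcases hr1 : p1.2 with _ | o1
    · -- none, none: constant false circuit
      have hwf : wfL (p1.1 ++ [Gate.const false]) := by
        apply wfL_concat B2
        intro k hk; simp [Gate.deps] at hk
      have hout : p1.1.length < (p1.1 ++ [Gate.const false]).length := by simp
      refine ⟨toCircuit _ hwf p1.1.length hout, ?_, ?_⟩
      · intro x
        rw [toCircuit_output, evalL_concat]
        have F0 : ((!(x j)) && s0.eval x) = false := by
          have h := (A4 x).symm; rw [hr0, hnot x] at h; simpa [optVal] using h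
        have F1 : ((x j) && s1.eval x) = false := by
          have h := (B4 x).symm; rw [hr1, hinp x] at h; simpa [optVal] using h
        cases hx : x j
        · simp [hx] at F0; simp [DTree.eval, hx, F0]
        · simp [hx] at F1; simp [DTree.eval, hx, F1]
      · intro x
        rw [toCircuit_energyAt]
        have hlen : (p1.1 ++ [Gate.const false]).length = p1.1.length + 1 := by simp
        have h1 := actCount_split (p1.1 ++ [Gate.const false]) x
          (show 0 ≤ 2 * n by omega) (show 2 * n ≤ (p1.1 ++ [Gate.const false]).length by rw [hlen]; omega)
        have h2 : actCount (p1.1 ++ [Gate.const false]) x 0 (2 * n) ≤ n :=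
          actCount_base_le (hbase1.trans ⟨[Gate.const false], rfl⟩) x
        have h3 : actCount (p1.1 ++ [Gate.const false]) x (2 * n) (p1.1 ++ [Gate.const false]).length ≤
            2 * max s0.depth s1.depth := by
          rw [hlen, actCount_split _ x (show 2 * n ≤ p1.1.length by omega) (Nat.le_succ _),
            actCount_append _ _ _ (le_refl _), actCount_singleton, actP_concat]
          have : (Gate.const false : Gate n).isInner = false := rfl
          rw [this]
          simp only [Bool.false_and, Bool.false_eq_true, if_false]
          have := HE' x
          omega
        rw [h1]
        simp only [DTree.depth]
        omega
    · -- none, some o1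
      refine ⟨toCircuit p1.1 B2 o1 (B3 o1 hr1), ?_, ?_⟩
      · intro x
        rw [toCircuit_output]
        have F0 : ((!(x j)) && s0.eval x) = false := by
          have h := (A4 x).symm; rw [hr0, hnot x] at h; simpa [optVal] using h
        have hval1 : evalL p1.1 x o1 = ((x j) && s1.eval x) := by
          have h := B4 x; rw [hr1, hinp x] at h; simpa [optVal] using h
        rw [hval1]
        cases hx : x j
        · simp [hx] at F0; simp [DTree.eval, hx, F0]
        · simp [DTree.eval, hx]
      · intro x
        rw [toCircuit_energyAt]
        have h1 := actCount_split p1.1 x (show 0 ≤ 2 * n by omega) hb2n1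
        have h2 := actCount_base_le hbase1 x
        have h3 := HE' x
        rw [h1]
        simp only [DTree.depth]
        omega
    · -- some o0, none
      refine ⟨toCircuit p1.1 B2 o0 (lt_of_lt_of_le (A3 o0 hr0) B1.length_le), ?_, ?_⟩
      · intro x
        rw [toCircuit_output]
        have F1 : ((x j) && s1.eval x) = false := by
          have h := (B4 x).symm; rw [hr1, hinp x] at h; simpa [optVal] using h
        have hval0 : evalL p1.1 x o0 = ((!(x j)) && s0.eval x) := by
          rw [evalL_prefix B1 x (A3 o0 hr0)]
          have h := A4 x; rw [hr0, hnot x] at h; simpa [optVal] using h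
        rw [hval0]
        cases hx : x j
        · simp [DTree.eval, hx]
        · simp [hx] at F1; simp [DTree.eval, hx, F1]
      · intro x
        rw [toCircuit_energyAt]
        have h1 := actCount_split p1.1 x (show 0 ≤ 2 * n by omega) hb2n1
        have h2 := actCount_base_le hbase1 x
        have h3 := HE' x
        rw [h1]
        simp only [DTree.depth]
        omega
    · -- some o0, some o1
      have ho0 : o0 < p1.1.length := lt_of_lt_of_le (A3 o0 hr0) B1.length_le
      have ho1 : o1 < p1.1.length := B3 o1 hr1
      have hwf : wfL (p1.1 ++ [Gate.or o0 o1]) := by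
        apply wfL_concat B2
        intro k hk; simp [Gate.deps] at hk; rcases hk with h | h <;> omega
      have hout : p1.1.length < (p1.1 ++ [Gate.or o0 o1]).length := by simp
      have hval0 : ∀ x, evalL p1.1 x o0 = ((!(x j)) && s0.eval x) := by
        intro x
        rw [evalL_prefix B1 x (A3 o0 hr0)]
        have h := A4 x; rw [hr0, hnot x] at h; simpa [optVal] using h
      have hval1 : ∀ x, evalL p1.1 x o1 = ((x j) && s1.eval x) := by
        intro x
        have h := B4 x; rw [hr1, hinp x] at h; simpa [optVal] using h
      have hvalor : ∀ x, evalL (p1.1 ++ [Gate.or o0 o1]) x p1.1.length =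
          DTree.eval (DTree.node j s0 s1) x := by
        intro x
        rw [evalL_concat_or p1.1 x ho0 ho1, hval0 x, hval1 x]
        cases hx : x j <;> simp [DTree.eval, hx]
      refine ⟨toCircuit _ hwf p1.1.length hout, ?_, ?_⟩
      · intro x
        rw [toCircuit_output, hvalor x]
      · intro x
        rw [toCircuit_energyAt]
        have hlen : (p1.1 ++ [Gate.or o0 o1]).length = p1.1.length + 1 := by simp
        have h1 := actCount_split (p1.1 ++ [Gate.or o0 o1]) x
          (show 0 ≤ 2 * n by omega) (show 2 * n ≤ (p1.1 ++ [Gate.or o0 o1]).length by rw [hlen]; omega)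
        have h2 : actCount (p1.1 ++ [Gate.or o0 o1]) x 0 (2 * n) ≤ n :=
          actCount_base_le (hbase1.trans ⟨[Gate.or o0 o1], rfl⟩) x
        have h3 : actCount (p1.1 ++ [Gate.or o0 o1]) x (2 * n) (p1.1 ++ [Gate.or o0 o1]).length ≤
            2 * max s0.depth s1.depth := by
          rw [hlen, actCount_split _ x (show 2 * n ≤ p1.1.length by omega) (Nat.le_succ _),
            actCount_append _ _ _ (le_refl _), actCount_singleton, actP_concat, hvalor x]
          have hinner : (Gate.or o0 o1 : Gate n).isInner = true := rfl
          rw [hinner]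
          simp only [Bool.true_and]
          have h := HE x
          cases he : DTree.eval (DTree.node j s0 s1) x
          · simp only [he, Bool.false_eq_true, if_false] at h ⊢
            have hdon : (if x j then s1.depth else s0.depth) ≤ max s0.depth s1.depth := by
              cases hx : x j <;> simp [hx, hm1, hm2]
            omega
          · simp only [he, if_true] at h ⊢
            -- need: count + 1 ≤ 2 * max
            cases hx : x j
            · -- on-side s0
              simp only [hx, Bool.false_eq_true, if_false] at h
              rcases DTree.shape s0 with ⟨b, hbs⟩ | hd0
              · subst hbs
                have he0 : b = true := by simpa [DTree.eval, hx] using he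
                subst he0
                rcases DTree.shape s1 with ⟨b1, hbs1⟩ | hd1
                · subst hbs1
                  cases b1
                  · have hnone : p1.2 = none := by rw [hp1, buildT_leaf_false]
                    rw [hr1] at hnone; exact absurd hnone (by simp)
                  · exact absurd rfl (hne true true rfl rfl)
                · simp only [DTree.depth] at h ⊢
                  omega
              · omega
            · -- on-side s1
              simp only [hx, if_true] at h
              rcases DTree.shape s1 with ⟨b, hbs⟩ | hd1
              · subst hbs
                have he1 : b = true := by simpa [DTree.eval, hx] using he
                subst he1
                rcases DTree.shape s0 with ⟨b0, hbs0⟩ | hd0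
                · subst hbs0
                  cases b0
                  · have hnone : p0.2 = none := by rw [hp0, buildT_leaf_false]
                    rw [hr0] at hnone; exact absurd hnone (by simp)
                  · exact absurd rfl (hne true true rfl rfl)
                · simp only [DTree.depth] at h ⊢
                  omega
              · omega
        rw [h1]
        simp only [DTree.depth]
        omega
def fullT (n : ℕ) : ℕ → ((Fin n → Bool) → Bool) → DTree n
  | 0, g => .leaf (g (fun _ => false))
  | m + 1, g =>
    if h : m < n then
      .node ⟨m, h⟩ (fullT n m (fun x => g (Function.update x ⟨m, h⟩ false)))
                   (fullT n m (fun x => g (Function.update x ⟨m, h⟩ true)))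
    else fullT n m g

lemma fullT_eval (m : ℕ) : ∀ (g : (Fin n → Bool) → Bool) (x : Fin n → Bool),
    (fullT n m g).eval x = g (fun i => if (i : ℕ) < m then x i else false) := by
  induction m with
  | zero =>
    intro g x
    show g (fun _ => false) = _
    congr 1
  | succ m ih =>
    intro g x
    rw [fullT]
    by_cases h : m < n
    · rw [dif_pos h]
      show (if x ⟨m, h⟩ then _ else _) = _
      cases hx : x ⟨m, h⟩
      · simp only [Bool.false_eq_true, if_false]
        rw [ih]
        congr 1
        funext i
        rw [Function.update_apply]
        by_cases hi : i = ⟨m, h⟩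
        · subst hi; simp [hx]
        · have : (i : ℕ) ≠ m := fun hc => hi (Fin.ext hc)
          simp only [hi, if_false]
          have : ((i : ℕ) < m ↔ (i : ℕ) < m + 1) := by omega
          by_cases h2 : (i : ℕ) < m <;> simp [h2, show ((i:ℕ) < m + 1) = ((i:ℕ) < m) from by
            simp only [eq_iff_iff]; omega]
      · simp only [if_true]
        rw [ih]
        congr 1
        funext i
        rw [Function.update_apply]
        by_cases hi : i = ⟨m, h⟩
        · subst hi; simp [hx]
        · have hne : (i : ℕ) ≠ m := fun hc => hi (Fin.ext hc)
          simp only [hi, if_false]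
          by_cases h2 : (i : ℕ) < m <;> simp [h2, show ((i:ℕ) < m + 1) = ((i:ℕ) < m) from by
            simp only [eq_iff_iff]; omega]
    · rw [dif_neg h]
      rw [ih]
      congr 1
      funext i
      have hi : (i : ℕ) < n := i.isLt
      have hmi : (i : ℕ) < m := by omega
      simp [hmi, show (i : ℕ) < m + 1 from by omega]

lemma fullT_computes (f : (Fin n → Bool) → Bool) : ∀ x, (fullT n n f).eval x = f x := by
  intro x
  rw [fullT_eval]
  congr 1
  funext i
  simp [i.isLt]
end Lists

/-- For any Boolean function `f : {0,1}^n → {0,1}`,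
`EC(f) ≤ n + 2·D(f) − 2`. -/
theorem stmt0 (n : ℕ) (f : (Fin n → Bool) → Bool) :
    EC f ≤ n + 2 * Dcomp f - 2 := by
  have hne : {k | ∃ T : DTree n, (∀ x, T.eval x = f x) ∧ T.depth = k}.Nonempty :=
    ⟨(fullT n n f).depth, fullT n n f, fullT_computes f, rfl⟩
  obtain ⟨T, hT, hd⟩ : ∃ T : DTree n, (∀ x, T.eval x = f x) ∧ T.depth = Dcomp f :=
    Nat.sInf_mem hne
  obtain ⟨C, hC1, hC2⟩ := main_circuit T.reduce (DTree.reduce_reduced T)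
  have hcomp : C.Computes f := fun x => by
    rw [hC1 x, DTree.reduce_eval, hT x]
  have henergy : C.energy ≤ n + 2 * Dcomp f - 2 := by
    apply Finset.sup_le
    intro x _
    have h1 := hC2 x
    have h2 : T.reduce.depth ≤ Dcomp f := by rw [← hd]; exact DTree.reduce_depth T
    omega
  exact le_trans (Nat.sInf_le ⟨C, hcomp, rfl⟩) henergy
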